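/- Let J = ∫₀³ (2−x) · ∏_{γ∈Φ⁺} ( ⟨xω₂+(6−2x)(ω₀+ω₁), γ⟩ / ⟨ρ, γ⟩ ) dx (an integral of a rational function of x over [0,3], the denominator being a nonzero constant). Then 8 · 7! · J = 2⁴·3⁹·5·11; in particular 8 · 7! · J > 0. (This quantity is the invariant ξ(Z) = β(E) for the Pasquier two-orbits variety Pas_{A₁×G₂}, whose positivity proves that Pas_{A₁×G₂} is K-polystable and hence admits a Kähler–Einstein metric.) -/

import Mathlib

open scoped InnerProductSpace

noncomputable section

namespace PasquierA1G2

/-- ℝ⁵ with its standard Euclidean inner product. -/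
abbrev W : Type := EuclideanSpace ℝ (Fin 5)

/-- The simple roots of A₁ × G₂, realized in ℝ⁵. -/
def α₀ : W := (WithLp.equiv 2 (Fin 5 → ℝ)).symm ![1, -1, 0, 0, 0]
def α₁ : W := (WithLp.equiv 2 (Fin 5 → ℝ)).symm ![0, 0, 1, -1, 0]
def α₂ : W := (WithLp.equiv 2 (Fin 5 → ℝ)).symm ![0, 0, -2, 1, 1]

/-- The fundamental weights of A₁ × G₂. -/
def ω₀ : W := (1 / 2 : ℝ) • α₀
def ω₁ : W := (2 : ℝ) • α₁ + α₂
def ω₂ : W := (3 : ℝ) • α₁ + (2 : ℝ) • α₂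

/-- The 7 positive roots of A₁ × G₂. -/
def PhiPlus : List W :=
  [α₀, α₁, α₂, α₁ + α₂, (2 : ℝ) • α₁ + α₂, (3 : ℝ) • α₁ + α₂,
   (3 : ℝ) • α₁ + (2 : ℝ) • α₂]

/-- The half-sum of positive roots ρ = α₀/2 + 5α₁ + 3α₂. -/
def ρ : W := (1 / 2 : ℝ) • α₀ + (5 : ℝ) • α₁ + (3 : ℝ) • α₂

/-- ξ(Z) = 8 · 7! · J for Pas_{A₁×G₂} equals 2⁴·3⁹·5·11 > 0, where
J = ∫₀³ (2−x) ∏_{γ∈Φ⁺} (⟨xω₂+(6−2x)(ω₀+ω₁), γ⟩ / ⟨ρ, γ⟩) dx. -/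
theorem xi_A1G2_positive :
    (8 : ℝ) * (Nat.factorial 7 : ℝ) *
        (∫ x in (0 : ℝ)..3, (2 - x) *
          (PhiPlus.map fun γ =>
            ⟪x • ω₂ + (6 - 2 * x) • (ω₀ + ω₁), γ⟫_ℝ / ⟪ρ, γ⟫_ℝ).prod)
      = 2 ^ 4 * 3 ^ 9 * 5 * 11 ∧
    0 < (8 : ℝ) * (Nat.factorial 7 : ℝ) *
        (∫ x in (0 : ℝ)..3, (2 - x) *
          (PhiPlus.map fun γ =>
            ⟪x • ω₂ + (6 - 2 * x) • (ω₀ + ω₁), γ⟫_ℝ / ⟪ρ, γ⟫_ℝ).prod) := by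
  have key : ∀ x : ℝ, (2 - x) *
      (PhiPlus.map fun γ =>
        ⟪x • ω₂ + (6 - 2 * x) • (ω₀ + ω₁), γ⟫_ℝ / ⟪ρ, γ⟫_ℝ).prod
      = (7776/5)*x - 1944*x^2 + (3996/5)*x^3 - 90*x^4 - (81/5)*x^5 + 4*x^6 - (1/5)*x^7 := by
    intro x
    simp only [PhiPlus, ρ, ω₀, ω₁, ω₂, α₀, α₁, α₂, List.map_cons, List.map_nil,
      List.prod_cons, List.prod_nil, PiLp.inner_apply, RCLike.inner_apply, Fin.sum_univ_five,
      PiLp.add_apply, PiLp.smul_apply, WithLp.equiv_symm_apply, PiLp.toLp_apply, smul_eq_mul,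
      Matrix.cons_val_zero, Matrix.cons_val_one, Matrix.head_cons, Matrix.cons_val_two,
      Matrix.tail_cons, Matrix.cons_val_three, Matrix.cons_val_four, conj_trivial]
    ring
  have hint : (∫ x in (0:ℝ)..3, (2 - x) *
      (PhiPlus.map fun γ =>
        ⟪x • ω₂ + (6 - 2 * x) • (ω₀ + ω₁), γ⟫_ℝ / ⟪ρ, γ⟫_ℝ).prod) = 24057/56 := by
    rw [show (fun x : ℝ => (2 - x) *
        (PhiPlus.map fun γ =>
          ⟪x • ω₂ + (6 - 2 * x) • (ω₀ + ω₁), γ⟫_ℝ / ⟪ρ, γ⟫_ℝ).prod)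
      = fun x : ℝ => (7776/5)*x - 1944*x^2 + (3996/5)*x^3 - 90*x^4 - (81/5)*x^5 + 4*x^6
        - (1/5)*x^7 from funext key]
    have h : ∀ y : ℝ, HasDerivAt (fun t : ℝ =>
        (3888/5)*t^2 - 648*t^3 + (999/5)*t^4 - 18*t^5 - (27/10)*t^6 + (4/7)*t^7 - (1/40)*t^8)
        ((7776/5)*y - 1944*y^2 + (3996/5)*y^3 - 90*y^4 - (81/5)*y^5 + 4*y^6 - (1/5)*y^7) y := by
      intro y
      have := ((((((((hasDerivAt_pow 2 y).const_mul (3888/5:ℝ)).sub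
        ((hasDerivAt_pow 3 y).const_mul (648:ℝ))).add
        ((hasDerivAt_pow 4 y).const_mul (999/5:ℝ))).sub
        ((hasDerivAt_pow 5 y).const_mul (18:ℝ))).sub
        ((hasDerivAt_pow 6 y).const_mul (27/10:ℝ))).add
        ((hasDerivAt_pow 7 y).const_mul (4/7:ℝ))).sub
        ((hasDerivAt_pow 8 y).const_mul (1/40:ℝ)))
      refine this.congr_deriv ?_
      push_cast
      ring
    rw [intervalIntegral.integral_eq_sub_of_hasDerivAt (fun y _ => h y)
      ((Continuous.intervalIntegrable (by fun_prop) _ _))]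
    norm_num
  rw [hint]
  norm_num [Nat.factorial]

end PasquierA1G2
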